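/- Let ℙ be a shift-invariant probability measure satisfying the upper-decoupling inequality ℙ_{n+m}(ab) ≤ C ℙₙ(a)ℙₘ(b). For ε > 0 define Bₙ,ε := {x : R̂ₙ(x) ≤ exp(−log ℙ̂ₙ(x₁ⁿ) − nε)}. Then ℙ(Bₙ,ε) ≤ C² e^{−nε} for all n, and consequently ∑ₙ ℙ(Bₙ,ε) < ∞ and, by Borel–Cantelli, liminf_{n→∞} (1/n)(log R̂ₙ(x) + log ℙ̂ₙ(x₁ⁿ)) ≥ 0 for ℙ-almost every x. -/

import Mathlib

open MeasureTheory Filter Finset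

variable {𝒜 : Type*}

/-- The left shift on one-sided sequences. -/
def shift : (ℕ → 𝒜) → (ℕ → 𝒜) := fun x n => x (n + 1)

/-- The `n`-prefix of a sequence (0-indexed). -/
def pref (n : ℕ) (x : ℕ → 𝒜) : Fin n → 𝒜 := fun i => x i.val

/-- The cylinder determined by a word. -/
def cyl {n : ℕ} (a : Fin n → 𝒜) : Set (ℕ → 𝒜) := {x | pref n x = a}

/-- The `n`-th marginal of a measure, as a real-valued function on words. -/
noncomputable def marg [MeasurableSpace 𝒜] (P : Measure (ℕ → 𝒜)) (n : ℕ)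
    (a : Fin n → 𝒜) : ℝ := (P (cyl a)).toReal

/-- The reversal of a word with respect to an involution `θ`. -/
def wordRev (θ : 𝒜 → 𝒜) {n : ℕ} (a : Fin n → 𝒜) : Fin n → 𝒜 := fun i => θ (a i.rev)

/-- Shift invariance of a measure. -/
def ShiftInv [MeasurableSpace 𝒜] (P : Measure (ℕ → 𝒜)) : Prop :=
  ∀ s : Set (ℕ → 𝒜), P (shift ⁻¹' s) = P s

/-- The waiting time `Wₙ(x,y)`: first `k ≥ 1` such that `y_k^{k+n−1} = x₁ⁿ`
(0-indexed: `y (k−1+i) = x i` for `i < n`), with value `∞` if no such `k` exists. -/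
noncomputable def waitT (n : ℕ) (x y : ℕ → 𝒜) : ℕ∞ :=
  sInf ((fun k : ℕ => (k : ℕ∞)) ''
    {k : ℕ | 1 ≤ k ∧ ∀ i : Fin n, y (k - 1 + i.val) = x i.val})

/-- The recurrence time `Rₙ(x)`: first `k ≥ 1` such that `x_{n+k}^{n+k+n−1} = x₁ⁿ`. -/
noncomputable def recT (n : ℕ) (x : ℕ → 𝒜) : ℕ∞ :=
  sInf ((fun k : ℕ => (k : ℕ∞)) ''
    {k : ℕ | 1 ≤ k ∧ ∀ i : Fin n, x (n + k - 1 + i.val) = x i.val})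

/-- The reversed recurrence time `R̂ₙ(x)`: first `k ≥ 1` such that
`x_{n+k}^{n+k+n−1} = x̂₁ⁿ`, where `x̂₁ⁿ` is the `θ`-reversal of the `n`-prefix. -/
noncomputable def recRevT (θ : 𝒜 → 𝒜) (n : ℕ) (x : ℕ → 𝒜) : ℕ∞ :=
  sInf ((fun k : ℕ => (k : ℕ∞)) ''
    {k : ℕ | 1 ≤ k ∧ ∀ i : Fin n, x (n + k - 1 + i.val) = wordRev θ (pref n x) i})

/-- `(1/n)(log R̂ₙ(x) + log ℙ̂ₙ(x₁ⁿ))`, valued in `EReal`, equal to `⊤` when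
`R̂ₙ(x) = ∞` (convention `log ∞ = ∞`). -/
noncomputable def recRevLogTerm [Fintype 𝒜] [MeasurableSpace 𝒜] (θ : 𝒜 → 𝒜)
    (P : Measure (ℕ → 𝒜)) (n : ℕ) (x : ℕ → 𝒜) : EReal :=
  if recRevT θ n x = ⊤ then (⊤ : EReal)
  else (((Real.log (WithTop.untopD 0 (recRevT θ n x) : ℕ) +
      Real.log (marg P n (wordRev θ (pref n x)))) / n : ℝ) : EReal)

lemma mem_cyl {n : ℕ} (a : Fin n → 𝒜) (x : ℕ → 𝒜) :
    x ∈ cyl a ↔ ∀ i : Fin n, x i.val = a i := by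
  simp [cyl, pref, funext_iff]

lemma cyl_measurable [MeasurableSpace 𝒜] [MeasurableSingletonClass 𝒜] {n : ℕ}
    (a : Fin n → 𝒜) : MeasurableSet (cyl a) := by
  have : cyl a = ⋂ i : Fin n, (fun x : ℕ → 𝒜 => x i.val) ⁻¹' {a i} := by
    ext x; simp [mem_cyl]
  rw [this]
  exact MeasurableSet.iInter fun i =>
    (measurable_pi_apply i.val) (measurableSet_singleton (a i))

lemma sInf_image_coe_eq {T : Set ℕ} {k : ℕ}
    (h : sInf ((fun k : ℕ => (k : ℕ∞)) '' T) = (k : ℕ∞)) : k ∈ T := by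
  have hne : T.Nonempty := by
    by_contra hT
    rw [Set.not_nonempty_iff_eq_empty] at hT
    rw [hT] at h
    simp at h
  have hmem : sInf T ∈ T := Nat.sInf_mem hne
  have : sInf ((fun k : ℕ => (k : ℕ∞)) '' T) = ((sInf T : ℕ) : ℕ∞) := by
    apply le_antisymm
    · exact sInf_le ⟨sInf T, hmem, rfl⟩
    · exact le_sInf (by rintro _ ⟨j, hj, rfl⟩; exact Nat.cast_le.mpr (Nat.sInf_le hj))
  rw [this] at h
  have : sInf T = k := by exact_mod_cast h
  rwa [this] at hmem

lemma sum_cyl_eq_one [Fintype 𝒜] [MeasurableSpace 𝒜] [MeasurableSingletonClass 𝒜]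
    (P : Measure (ℕ → 𝒜)) [IsProbabilityMeasure P] (m : ℕ) :
    ∑ a : Fin m → 𝒜, P (cyl a) = 1 := by
  rw [← tsum_fintype (L := SummationFilter.unconditional _)]
  rw [← measure_iUnion ?_ (fun a => cyl_measurable a)]
  · have : ⋃ a : Fin m → 𝒜, cyl a = Set.univ := by
      ext x; simp only [Set.mem_iUnion, Set.mem_univ, iff_true]
      exact ⟨pref m x, rfl⟩
    rw [this, measure_univ]
  · intro a b hab
    simp only [Set.disjoint_left]
    intro x hxa hxb
    exact hab (hxa.symm.trans hxb)

lemma sum_marg_eq_one [Fintype 𝒜] [MeasurableSpace 𝒜] [MeasurableSingletonClass 𝒜]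
    (P : Measure (ℕ → 𝒜)) [IsProbabilityMeasure P] (m : ℕ) :
    ∑ a : Fin m → 𝒜, marg P m a = 1 := by
  have := sum_cyl_eq_one P (𝒜 := 𝒜) m
  have h2 : (∑ a : Fin m → 𝒜, P (cyl a)).toReal = ∑ a : Fin m → 𝒜, (P (cyl a)).toReal :=
    ENNReal.toReal_sum (fun a _ => measure_ne_top P _)
  rw [this] at h2
  simpa [marg] using h2.symm

lemma marg_nonneg [MeasurableSpace 𝒜] (P : Measure (ℕ → 𝒜)) (n : ℕ) (a : Fin n → 𝒜) :
    0 ≤ marg P n a := ENNReal.toReal_nonneg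

lemma cyl_eq_ofReal_marg [MeasurableSpace 𝒜] (P : Measure (ℕ → 𝒜)) [IsProbabilityMeasure P]
    {n : ℕ} (a : Fin n → 𝒜) : P (cyl a) = ENNReal.ofReal (marg P n a) := by
  rw [marg, ENNReal.ofReal_toReal (measure_ne_top P _)]

lemma key_bound [Fintype 𝒜] [MeasurableSpace 𝒜] [MeasurableSingletonClass 𝒜]
    (P : Measure (ℕ → 𝒜)) [IsProbabilityMeasure P]
    {C : ℝ} (hC : 1 ≤ C)
    (hdec : ∀ (n m : ℕ) (a : Fin n → 𝒜) (b : Fin m → 𝒜),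
      marg P (n + m) (Fin.append a b) ≤ C * marg P n a * marg P m b)
    (n k : ℕ) (hk : 1 ≤ k) (a b : Fin n → 𝒜) :
    P (cyl a ∩ {x | ∀ i : Fin n, x (n + k - 1 + i.val) = b i}) ≤
      ENNReal.ofReal (C ^ 2 * marg P n a * marg P n b) := by
  set j := k - 1 with hj
  have hkj : n + k - 1 = n + j := by omega
  set w : (Fin j → 𝒜) → (Fin (n + (j + n)) → 𝒜) :=
    fun c => Fin.append a (Fin.append c b) with hw
  have hsub : cyl a ∩ {x | ∀ i : Fin n, x (n + k - 1 + i.val) = b i} ⊆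
      ⋃ c : Fin j → 𝒜, cyl (w c) := by
    rintro x ⟨hxa, hx2⟩
    refine Set.mem_iUnion.mpr ⟨fun t => x (n + t.val), ?_⟩
    rw [mem_cyl]
    intro i
    refine Fin.addCases (motive := fun i => x (i : Fin (n + (j+n))).val = w _ i) ?_ ?_ i
    · intro i1
      rw [hw]
      simp only [Fin.append_left, Fin.coe_castAdd]
      exact (mem_cyl a x).mp hxa i1
    · intro i2
      rw [hw]
      simp only [Fin.append_right, Fin.coe_natAdd]
      refine Fin.addCases (motive := fun i2 => x (n + (i2 : Fin (j+n)).val) = Fin.append _ b i2) ?_ ?_ i2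
      · intro t
        simp [Fin.append_left]
      · intro t
        simp only [Fin.append_right, Fin.coe_natAdd]
        have : n + (j + t.val) = n + k - 1 + t.val := by omega
        rw [this]
        exact hx2 t
  calc P (cyl a ∩ {x | ∀ i : Fin n, x (n + k - 1 + i.val) = b i})
      ≤ P (⋃ c : Fin j → 𝒜, cyl (w c)) := measure_mono hsub
    _ ≤ ∑' c : Fin j → 𝒜, P (cyl (w c)) := measure_iUnion_le _
    _ = ∑ c : Fin j → 𝒜, P (cyl (w c)) := tsum_fintype _
    _ = ∑ c : Fin j → 𝒜, ENNReal.ofReal (marg P (n + (j + n)) (w c)) := by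
        simp_rw [cyl_eq_ofReal_marg]
    _ = ENNReal.ofReal (∑ c : Fin j → 𝒜, marg P (n + (j + n)) (w c)) := by
        rw [ENNReal.ofReal_sum_of_nonneg (fun c _ => marg_nonneg _ _ _)]
    _ ≤ ENNReal.ofReal (C ^ 2 * marg P n a * marg P n b) := by
        apply ENNReal.ofReal_le_ofReal
        have hstep : ∀ c : Fin j → 𝒜, marg P (n + (j + n)) (w c) ≤
            (C ^ 2 * marg P n a * marg P n b) * marg P j c := by
          intro c
          have h1 := hdec n (j + n) a (Fin.append c b)
          have h2 := hdec j n c b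
          have hCa : 0 ≤ C * marg P n a :=
            mul_nonneg (le_trans zero_le_one hC) (marg_nonneg P n a)
          calc marg P (n + (j + n)) (w c) ≤ C * marg P n a * marg P (j + n) (Fin.append c b) := h1
            _ ≤ C * marg P n a * (C * marg P j c * marg P n b) := by
                exact mul_le_mul_of_nonneg_left h2 hCa
            _ = (C ^ 2 * marg P n a * marg P n b) * marg P j c := by ring
        calc ∑ c : Fin j → 𝒜, marg P (n + (j + n)) (w c)
            ≤ ∑ c : Fin j → 𝒜, (C ^ 2 * marg P n a * marg P n b) * marg P j c :=
              Finset.sum_le_sum (fun c _ => hstep c)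
          _ = (C ^ 2 * marg P n a * marg P n b) * ∑ c : Fin j → 𝒜, marg P j c := by
              rw [Finset.mul_sum]
          _ = C ^ 2 * marg P n a * marg P n b := by rw [sum_marg_eq_one]; ring

lemma prob_bound [Fintype 𝒜] [MeasurableSpace 𝒜] [MeasurableSingletonClass 𝒜]
    (θ : 𝒜 → 𝒜)
    (P : Measure (ℕ → 𝒜)) [IsProbabilityMeasure P]
    {C : ℝ} (hC : 1 ≤ C)
    (hdec : ∀ (n m : ℕ) (a : Fin n → 𝒜) (b : Fin m → 𝒜),
      marg P (n + m) (Fin.append a b) ≤ C * marg P n a * marg P m b)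
    (ε : ℝ) (hε : 0 < ε) (n : ℕ) :
    P {x | ∃ k : ℕ, recRevT θ n x = (k : ℕ∞) ∧
        (k : ℝ) ≤ Real.exp (-Real.log (marg P n (wordRev θ (pref n x))) - n * ε)} ≤
      ENNReal.ofReal (C ^ 2 * Real.exp (-(n * ε))) := by
  set K : (Fin n → 𝒜) → ℕ :=
    fun a => ⌊Real.exp (-Real.log (marg P n (wordRev θ a)) - n * ε)⌋₊ with hK
  set E : (Fin n → 𝒜) → ℕ → Set (ℕ → 𝒜) :=
    fun a k => cyl a ∩ {x | ∀ i : Fin n, x (n + k - 1 + i.val) = wordRev θ a i} with hE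
  have hsub : {x : ℕ → 𝒜 | ∃ k : ℕ, recRevT θ n x = (k : ℕ∞) ∧
      (k : ℝ) ≤ Real.exp (-Real.log (marg P n (wordRev θ (pref n x))) - n * ε)} ⊆
      ⋃ a ∈ (Finset.univ : Finset (Fin n → 𝒜)), ⋃ k ∈ Finset.Icc 1 (K a), E a k := by
    rintro x ⟨k, hrec, hle⟩
    have hkmem := sInf_image_coe_eq hrec
    obtain ⟨hk1, hpat⟩ := hkmem
    refine Set.mem_iUnion₂.mpr ⟨pref n x, Finset.mem_univ _, ?_⟩
    refine Set.mem_iUnion₂.mpr ⟨k, ?_, ?_⟩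
    · rw [Finset.mem_Icc]
      exact ⟨hk1, Nat.le_floor hle⟩
    · exact ⟨rfl, hpat⟩
  calc P _ ≤ P (⋃ a ∈ (Finset.univ : Finset (Fin n → 𝒜)), ⋃ k ∈ Finset.Icc 1 (K a), E a k) :=
        measure_mono hsub
    _ ≤ ∑ a : Fin n → 𝒜, P (⋃ k ∈ Finset.Icc 1 (K a), E a k) :=
        measure_biUnion_finset_le _ _
    _ ≤ ∑ a : Fin n → 𝒜, ∑ k ∈ Finset.Icc 1 (K a), P (E a k) :=
        Finset.sum_le_sum (fun a _ => measure_biUnion_finset_le _ _)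
    _ ≤ ∑ a : Fin n → 𝒜, ENNReal.ofReal (C ^ 2 * Real.exp (-(n * ε)) * marg P n a) := by
        refine Finset.sum_le_sum (fun a _ => ?_)
        have hterm : ∀ k ∈ Finset.Icc 1 (K a), P (E a k) ≤
            ENNReal.ofReal (C ^ 2 * marg P n a * marg P n (wordRev θ a)) := by
          intro k hk
          rw [Finset.mem_Icc] at hk
          exact key_bound P hC hdec n k hk.1 a (wordRev θ a)
        calc (∑ k ∈ Finset.Icc 1 (K a), P (E a k))
            ≤ (Finset.Icc 1 (K a)).card •
                ENNReal.ofReal (C ^ 2 * marg P n a * marg P n (wordRev θ a)) :=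
              Finset.sum_le_card_nsmul _ _ _ hterm
          _ = (K a : ENNReal) * ENNReal.ofReal (C ^ 2 * marg P n a * marg P n (wordRev θ a)) := by
              rw [Nat.card_Icc]
              simp [nsmul_eq_mul]
          _ = ENNReal.ofReal ((K a : ℝ) * (C ^ 2 * marg P n a * marg P n (wordRev θ a))) := by
              rw [← ENNReal.ofReal_natCast (K a), ← ENNReal.ofReal_mul (Nat.cast_nonneg _)]
          _ ≤ ENNReal.ofReal (C ^ 2 * Real.exp (-(n * ε)) * marg P n a) := by
              apply ENNReal.ofReal_le_ofReal
              set m := marg P n a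
              set mh := marg P n (wordRev θ a)
              have hm : 0 ≤ m := marg_nonneg P n a
              have hmh : 0 ≤ mh := marg_nonneg P n (wordRev θ a)
              rcases eq_or_lt_of_le hmh with h0 | hpos
              · rw [← h0]
                have : 0 ≤ C ^ 2 * Real.exp (-(n * ε)) * m := by positivity
                nlinarith
              · have hfl : (K a : ℝ) ≤ Real.exp (-Real.log mh - n * ε) :=
                  Nat.floor_le (Real.exp_nonneg _)
                have hexp : Real.exp (-Real.log mh - n * ε) * mh = Real.exp (-(n * ε)) := by
                  rw [show -Real.log mh - n * ε = -(n * ε) + -Real.log mh by ring,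
                    Real.exp_add, Real.exp_neg, Real.exp_neg, Real.exp_log hpos]
                  field_simp
                have hKmh : (K a : ℝ) * mh ≤ Real.exp (-(n * ε)) := by
                  calc (K a : ℝ) * mh ≤ Real.exp (-Real.log mh - n * ε) * mh :=
                        mul_le_mul_of_nonneg_right hfl hmh
                    _ = Real.exp (-(n * ε)) := hexp
                calc (K a : ℝ) * (C ^ 2 * m * mh) = (C ^ 2 * m) * ((K a : ℝ) * mh) := by ring
                  _ ≤ (C ^ 2 * m) * Real.exp (-(n * ε)) :=
                      mul_le_mul_of_nonneg_left hKmh (by positivity)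
                  _ = C ^ 2 * Real.exp (-(n * ε)) * m := by ring
    _ = ENNReal.ofReal (C ^ 2 * Real.exp (-(n * ε))) := by
        rw [← ENNReal.ofReal_sum_of_nonneg (fun a _ => mul_nonneg (by positivity) (marg_nonneg P n a))]
        rw [← Finset.mul_sum, sum_marg_eq_one]
        ring_nf

lemma pointwise_lb [Fintype 𝒜] [MeasurableSpace 𝒜]
    (θ : 𝒜 → 𝒜) (P : Measure (ℕ → 𝒜)) (ε : ℝ) (n : ℕ) (hn : 1 ≤ n) (x : ℕ → 𝒜)
    (hx : x ∉ {x : ℕ → 𝒜 | ∃ k : ℕ, recRevT θ n x = (k : ℕ∞) ∧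
      (k : ℝ) ≤ Real.exp (-Real.log (marg P n (wordRev θ (pref n x))) - n * ε)}) :
    ((-ε : ℝ) : EReal) ≤ recRevLogTerm θ P n x := by
  by_cases h : recRevT θ n x = ⊤
  · rw [recRevLogTerm, if_pos h]
    exact le_top
  · rw [recRevLogTerm, if_neg h]
    obtain ⟨k, hk⟩ := WithTop.ne_top_iff_exists.mp h
    have hkmem := sInf_image_coe_eq hk.symm
    obtain ⟨hk1, -⟩ := hkmem
    have huntop : (WithTop.untopD 0 (recRevT θ n x) : ℕ) = k := by rw [← hk]; rfl
    have hnot : ¬ ((k : ℝ) ≤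
        Real.exp (-Real.log (marg P n (wordRev θ (pref n x))) - n * ε)) := by
      intro hle
      exact hx ⟨k, hk.symm, hle⟩
    push_neg at hnot
    have hkpos : (0 : ℝ) < (k : ℝ) := by exact_mod_cast hk1
    have hlog : -Real.log (marg P n (wordRev θ (pref n x))) - n * ε <
        Real.log (k : ℝ) := (Real.lt_log_iff_exp_lt hkpos).mpr hnot
    rw [EReal.coe_le_coe_iff, huntop]
    have hn0 : (0 : ℝ) < (n : ℝ) := by exact_mod_cast hn
    rw [le_div_iff₀ hn0]
    nlinarith

/-- Under upper decoupling, with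
`Bₙ,ε := {x : R̂ₙ(x) ≤ exp(−log ℙ̂ₙ(x₁ⁿ) − nε)}`, one has `ℙ(Bₙ,ε) ≤ C² e^{−nε}`, the
series `∑ₙ ℙ(Bₙ,ε)` converges, and by Borel–Cantelli
`liminf (1/n)(log R̂ₙ + log ℙ̂ₙ(x₁ⁿ)) ≥ 0` for `ℙ`-a.e. `x`. -/
theorem recRev_lower_estimate [Fintype 𝒜] [MeasurableSpace 𝒜] [MeasurableSingletonClass 𝒜]
    (θ : 𝒜 → 𝒜) (hθ : Function.Involutive θ)
    (P : Measure (ℕ → 𝒜)) [IsProbabilityMeasure P] (hinv : ShiftInv P)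
    (C : ℝ) (hC : 1 ≤ C)
    (hdec : ∀ (n m : ℕ) (a : Fin n → 𝒜) (b : Fin m → 𝒜),
      marg P (n + m) (Fin.append a b) ≤ C * marg P n a * marg P m b)
    :
    (∀ ε : ℝ, 0 < ε → ∀ n : ℕ,
      (P {x | ∃ k : ℕ, recRevT θ n x = (k : ℕ∞) ∧
          (k : ℝ) ≤ Real.exp (-Real.log (marg P n (wordRev θ (pref n x))) - n * ε)}).toReal ≤
        C ^ 2 * Real.exp (-(n * ε))) ∧
    (∀ ε : ℝ, 0 < ε → Summable (fun n : ℕ =>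
      (P {x | ∃ k : ℕ, recRevT θ n x = (k : ℕ∞) ∧
          (k : ℝ) ≤ Real.exp (-Real.log (marg P n (wordRev θ (pref n x))) - n * ε)}).toReal)) ∧
    (∀ᵐ x ∂P, 0 ≤ Filter.liminf (fun n : ℕ => recRevLogTerm θ P n x) atTop) := by
  have hB : ∀ (ε : ℝ), 0 < ε → ∀ n : ℕ,
      P {x | ∃ k : ℕ, recRevT θ n x = (k : ℕ∞) ∧
        (k : ℝ) ≤ Real.exp (-Real.log (marg P n (wordRev θ (pref n x))) - n * ε)} ≤
      ENNReal.ofReal (C ^ 2 * Real.exp (-(n * ε))) :=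
    fun ε hε n => prob_bound θ P hC hdec ε hε n
  have hsummable : ∀ ε : ℝ, 0 < ε → Summable (fun n : ℕ => C ^ 2 * Real.exp (-(n * ε))) := by
    intro ε hε
    have hfun : (fun n : ℕ => C ^ 2 * Real.exp (-(n * ε))) =
        fun n : ℕ => C ^ 2 * (Real.exp (-ε)) ^ n := by
      funext n
      rw [← Real.exp_nat_mul]
      congr 1
      ring
    rw [hfun]
    exact (summable_geometric_of_lt_one (Real.exp_nonneg _)
      (Real.exp_lt_one_iff.mpr (by linarith))).mul_left _
  refine ⟨?_, ?_, ?_⟩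
  · intro ε hε n
    exact ENNReal.toReal_le_of_le_ofReal (by positivity) (hB ε hε n)
  · intro ε hε
    exact Summable.of_nonneg_of_le (fun n => ENNReal.toReal_nonneg)
      (fun n => ENNReal.toReal_le_of_le_ofReal (by positivity) (hB ε hε n)) (hsummable ε hε)
  · have hae : ∀ m : ℕ, ∀ᵐ x ∂P, ∀ᶠ n in atTop,
        x ∉ {x : ℕ → 𝒜 | ∃ k : ℕ, recRevT θ n x = (k : ℕ∞) ∧
          (k : ℝ) ≤ Real.exp (-Real.log (marg P n (wordRev θ (pref n x))) -
            n * (1 / ((m : ℝ) + 1)))} := by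
      intro m
      have hε : (0 : ℝ) < 1 / ((m : ℝ) + 1) := by positivity
      apply ae_eventually_notMem
      have h1 := ENNReal.tsum_le_tsum (fun n => hB _ hε n)
      have h2 : (∑' n : ℕ, ENNReal.ofReal (C ^ 2 * Real.exp (-(n * (1 / ((m : ℝ) + 1)))))) =
          ENNReal.ofReal (∑' n : ℕ, C ^ 2 * Real.exp (-(n * (1 / ((m : ℝ) + 1))))) :=
        (ENNReal.ofReal_tsum_of_nonneg (fun n => by positivity) (hsummable _ hε)).symm
      exact ne_top_of_le_ne_top (by rw [h2]; exact ENNReal.ofReal_ne_top) h1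
    rw [← ae_all_iff] at hae
    filter_upwards [hae] with x hx
    have hlim : ∀ m : ℕ, ((-(1 / ((m : ℝ) + 1)) : ℝ) : EReal) ≤
        liminf (fun n : ℕ => recRevLogTerm θ P n x) atTop := by
      intro m
      refine le_liminf_of_le (by isBoundedDefault) ?_
      filter_upwards [hx m, eventually_ge_atTop 1] with n hn hn1
      exact pointwise_lb θ P _ n hn1 x hn
    by_contra hneg
    push_neg at hneg
    obtain ⟨r, hLr, hr0⟩ := EReal.lt_iff_exists_real_btwn.mp hneg
    have hr : r < 0 := by exact_mod_cast hr0
    obtain ⟨m, hm⟩ := exists_nat_one_div_lt (show (0:ℝ) < -r by linarith)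
    have hrm : (r : EReal) < ((-(1 / ((m : ℝ) + 1)) : ℝ) : EReal) := by
      have : r < -(1 / ((m : ℝ) + 1)) := by linarith
      exact_mod_cast this
    exact absurd (hLr.trans (hrm.trans_le (hlim m))) (lt_irrefl _)
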